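/- For real k, m ≥ 1, the sequence s_{k,m,n} := [Γ((k+m)n)/(Γ(mn)Γ(kn))] · [m^m k^k/(m+k)^{m+k}]^n is strictly increasing in the integer n ≥ 1. -/

import Mathlib

open Real MeasureTheory intervalIntegral

private lemma beta_eq (a b : ℝ) (ha : 0 < a) (hb : 0 < b) :
    ∫ x in (0:ℝ)..1, x ^ (a - 1) * (1 - x) ^ (b - 1)
      = Real.Gamma a * Real.Gamma b / Real.Gamma (a + b) := by
  have hG := Complex.Gamma_mul_Gamma_eq_betaIntegral (s := (a : ℂ)) (t := (b : ℂ))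
    (by simpa using ha) (by simpa using hb)
  have hbeta : Complex.betaIntegral (a : ℂ) (b : ℂ)
      = ((∫ x in (0:ℝ)..1, x ^ (a - 1) * (1 - x) ^ (b - 1) : ℝ) : ℂ) := by
    rw [Complex.betaIntegral, ← intervalIntegral.integral_ofReal]
    refine intervalIntegral.integral_congr fun x hx => ?_
    rw [Set.uIcc_of_le (by norm_num : (0:ℝ) ≤ 1)] at hx
    obtain ⟨hx0, hx1⟩ := hx
    push_cast
    rw [Complex.ofReal_cpow hx0, Complex.ofReal_cpow (by linarith)]
    push_cast
    ring
  have hGpos : (0:ℝ) < Real.Gamma (a + b) := Real.Gamma_pos_of_pos (by linarith)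
  have hGne : (Complex.Gamma ((a:ℂ) + b)) ≠ 0 := by
    rw [show ((a:ℂ) + b) = ((a + b : ℝ) : ℂ) by push_cast; ring, Complex.Gamma_ofReal]
    exact_mod_cast hGpos.ne'
  have hkey : ((∫ x in (0:ℝ)..1, x ^ (a - 1) * (1 - x) ^ (b - 1) : ℝ) : ℂ)
      = Complex.Gamma a * Complex.Gamma b / Complex.Gamma ((a:ℂ) + b) := by
    rw [← hbeta, eq_div_iff hGne]
    linear_combination -hG
  rw [Complex.Gamma_ofReal, Complex.Gamma_ofReal,
    show ((a:ℂ) + b) = ((a + b : ℝ) : ℂ) by push_cast; ring, Complex.Gamma_ofReal] at hkey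
  exact_mod_cast hkey

private lemma g_core {k m x : ℝ} (hk : 0 < k) (hm : 0 < m) (hx0 : 0 < x) (hx1 : x < 1) :
    x ^ m * (1 - x) ^ k ≤ (m / (m + k)) ^ m * (k / (m + k)) ^ k ∧
    (x ≠ m / (m + k) → x ^ m * (1 - x) ^ k < (m / (m + k)) ^ m * (k / (m + k)) ^ k) := by
  have hmk : 0 < m + k := by linarith
  have h1x : 0 < 1 - x := by linarith
  set p := m / (m + k) with hp
  set q := k / (m + k) with hq
  have hp0 : 0 < p := by positivity
  have hq0 : 0 < q := by positivity
  have hpq : p + q = 1 := by rw [hp, hq]; field_simp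
  set a := x / p with ha
  set b := (1 - x) / q with hb
  have ha0 : 0 < a := by positivity
  have hb0 : 0 < b := by positivity
  have hsum : p * a + q * b = 1 := by
    rw [ha, hb]; field_simp; ring
  have hexp : (a ^ p * b ^ q) ^ (m + k) = (x ^ m * (1 - x) ^ k) / (p ^ m * q ^ k) := by
    rw [Real.mul_rpow (by positivity) (by positivity),
      ← Real.rpow_mul ha0.le, ← Real.rpow_mul hb0.le,
      show p * (m + k) = m by rw [hp]; field_simp,
      show q * (m + k) = k by rw [hq]; field_simp,
      ha, hb, Real.div_rpow hx0.le hp0.le, Real.div_rpow h1x.le hq0.le,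
      div_mul_div_comm]
  have hub : p ^ m * q ^ k > 0 := by positivity
  constructor
  · have hgm : a ^ p * b ^ q ≤ 1 := by
      calc a ^ p * b ^ q ≤ p * a + q * b :=
        Real.geom_mean_le_arith_mean2_weighted hp0.le hq0.le ha0.le hb0.le hpq
      _ = 1 := hsum
    have := Real.rpow_le_one (by positivity) hgm hmk.le
    rw [hexp] at this
    exact (div_le_one hub).mp this
  · intro hxp
    have hne : a ≠ b := by
      intro h
      apply hxp
      rw [ha, hb] at h
      have h2 : x * q = (1 - x) * p := (div_eq_div_iff hp0.ne' hq0.ne').mp h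
      linear_combination h2 - x * hpq
    have hlog := strictConcaveOn_log_Ioi.2 (Set.mem_Ioi.mpr ha0) (Set.mem_Ioi.mpr hb0)
      hne hp0 hq0 hpq
    simp only [smul_eq_mul] at hlog
    rw [hsum, Real.log_one] at hlog
    have hlt : a ^ p * b ^ q < 1 := by
      have hlogt : Real.log (a ^ p * b ^ q) < 0 := by
        rw [Real.log_mul (by positivity) (by positivity),
          Real.log_rpow ha0, Real.log_rpow hb0]
        linarith
      have hexp' := Real.exp_log (x := a ^ p * b ^ q) (by positivity)
      calc a ^ p * b ^ q = Real.exp (Real.log (a ^ p * b ^ q)) := hexp'.symm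
        _ < Real.exp 0 := Real.exp_lt_exp.mpr hlogt
        _ = 1 := Real.exp_zero
    have := Real.rpow_lt_one (by positivity) hlt hmk
    rw [hexp] at this
    exact (div_lt_one hub).mp this

/-- For real `k, m ≥ 1`, the sequence
`s_{k,m,n} = Γ((k+m)n) / (Γ(mn)Γ(kn)) · [m^m k^k / (m+k)^(m+k)]^n`
is strictly increasing in the integer `n ≥ 1`. -/
theorem strictMono_gamma_series (k m : ℝ) (hk : 1 ≤ k) (hm : 1 ≤ m) :
    StrictMono (fun n : ℕ =>
      Real.Gamma ((k + m) * (n + 1)) /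
        (Real.Gamma (m * (n + 1)) * Real.Gamma (k * (n + 1))) *
        (m ^ m * k ^ k / (m + k) ^ (m + k)) ^ (n + 1)) := by
  have hm0 : 0 < m := by linarith
  have hk0 : 0 < k := by linarith
  have hmk : 0 < m + k := by linarith
  set c : ℝ := m ^ m * k ^ k / (m + k) ^ (m + k) with hcdef
  have hc0 : 0 < c := by positivity
  have hceq : c = (m / (m + k)) ^ m * (k / (m + k)) ^ k := by
    rw [hcdef, Real.div_rpow hm0.le hmk.le, Real.div_rpow hk0.le hmk.le,
      div_mul_div_comm, ← Real.rpow_add hmk]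
  set p : ℝ := m / (m + k) with hpdef
  have hp0 : 0 < p := by positivity
  have hp1 : p < 1 := by
    rw [hpdef, div_lt_one hmk]; linarith
  have hcont : ∀ N : ℝ, 1 ≤ N →
      Continuous (fun x : ℝ => x ^ (m * N - 1) * (1 - x) ^ (k * N - 1)) := by
    intro N hN
    have h1 : (0:ℝ) ≤ m * N - 1 := by nlinarith
    have h2 : (0:ℝ) ≤ k * N - 1 := by nlinarith
    exact (Real.continuous_rpow_const h1).mul
      ((Real.continuous_rpow_const h2).comp (continuous_const.sub continuous_id))
  have hgcont : Continuous (fun x : ℝ => x ^ m * (1 - x) ^ k) :=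
    (Real.continuous_rpow_const hm0.le).mul
      ((Real.continuous_rpow_const hk0.le).comp (continuous_const.sub continuous_id))
  set J : ℝ → ℝ := fun N => ∫ x in (0:ℝ)..1, x ^ (m * N - 1) * (1 - x) ^ (k * N - 1)
    with hJdef
  have hJeq : ∀ N : ℝ, 1 ≤ N →
      J N = Real.Gamma (m * N) * Real.Gamma (k * N) / Real.Gamma ((k + m) * N) := by
    intro N hN
    have h := beta_eq (m * N) (k * N) (by nlinarith) (by nlinarith)
    rw [hJdef]
    simp only
    rw [h, show m * N + k * N = (k + m) * N by ring]
  have hJpos : ∀ N : ℝ, 1 ≤ N → 0 < J N := by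
    intro N hN
    rw [hJeq N hN]
    have h1 := Real.Gamma_pos_of_pos (show 0 < m * N by nlinarith)
    have h2 := Real.Gamma_pos_of_pos (show 0 < k * N by nlinarith)
    have h3 := Real.Gamma_pos_of_pos (show 0 < (k + m) * N by nlinarith)
    positivity
  have key : ∀ N : ℝ, 1 ≤ N → J (N + 1) < c * J N := by
    intro N hN
    have hsplit : J (N + 1) = ∫ x in (0:ℝ)..1,
        (x ^ (m * N - 1) * (1 - x) ^ (k * N - 1)) * (x ^ m * (1 - x) ^ k) := by
      rw [hJdef]
      simp only
      refine intervalIntegral.integral_congr fun x hx => ?_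
      rw [Set.uIcc_of_le (by norm_num : (0:ℝ) ≤ 1)] at hx
      obtain ⟨hx0, hx1⟩ := hx
      rw [show m * (N + 1) - 1 = (m * N - 1) + m by ring,
        show k * (N + 1) - 1 = (k * N - 1) + k by ring,
        Real.rpow_add' hx0 (by nlinarith), Real.rpow_add' (by linarith) (by nlinarith)]
      ring
    have hcl : c * J N = ∫ x in (0:ℝ)..1,
        (x ^ (m * N - 1) * (1 - x) ^ (k * N - 1)) * c := by
      rw [hJdef]
      simp only
      rw [← intervalIntegral.integral_const_mul]
      exact intervalIntegral.integral_congr fun x _ => by ring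
    have hint1 : IntervalIntegrable
        (fun x : ℝ => (x ^ (m * N - 1) * (1 - x) ^ (k * N - 1)) * c) volume 0 1 :=
      ((hcont N hN).mul continuous_const).intervalIntegrable 0 1
    have hint2 : IntervalIntegrable
        (fun x : ℝ => (x ^ (m * N - 1) * (1 - x) ^ (k * N - 1)) * (x ^ m * (1 - x) ^ k))
        volume 0 1 :=
      ((hcont N hN).mul hgcont).intervalIntegrable 0 1
    have hFcont : Continuous
        (fun x : ℝ => (x ^ (m * N - 1) * (1 - x) ^ (k * N - 1)) * (c - x ^ m * (1 - x) ^ k)) :=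
      (hcont N hN).mul (continuous_const.sub hgcont)
    have hdiff : (∫ x in (0:ℝ)..1, (x ^ (m * N - 1) * (1 - x) ^ (k * N - 1)) * c)
        - (∫ x in (0:ℝ)..1,
            (x ^ (m * N - 1) * (1 - x) ^ (k * N - 1)) * (x ^ m * (1 - x) ^ k))
        = ∫ x in (0:ℝ)..1,
            (x ^ (m * N - 1) * (1 - x) ^ (k * N - 1)) * (c - x ^ m * (1 - x) ^ k) := by
      rw [← intervalIntegral.integral_sub hint1 hint2]
      exact intervalIntegral.integral_congr fun x _ => by ring
    have hpos : 0 < ∫ x in (0:ℝ)..1,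
        (x ^ (m * N - 1) * (1 - x) ^ (k * N - 1)) * (c - x ^ m * (1 - x) ^ k) := by
      have hsplit2 : (∫ x in (0:ℝ)..p,
            (x ^ (m * N - 1) * (1 - x) ^ (k * N - 1)) * (c - x ^ m * (1 - x) ^ k))
          + (∫ x in p..(1:ℝ),
            (x ^ (m * N - 1) * (1 - x) ^ (k * N - 1)) * (c - x ^ m * (1 - x) ^ k))
          = ∫ x in (0:ℝ)..1,
            (x ^ (m * N - 1) * (1 - x) ^ (k * N - 1)) * (c - x ^ m * (1 - x) ^ k) :=
        intervalIntegral.integral_add_adjacent_intervals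
          (hFcont.intervalIntegrable 0 p) (hFcont.intervalIntegrable p 1)
      have hfirst : 0 < ∫ x in (0:ℝ)..p,
          (x ^ (m * N - 1) * (1 - x) ^ (k * N - 1)) * (c - x ^ m * (1 - x) ^ k) := by
        refine intervalIntegral_pos_of_pos_on (hFcont.intervalIntegrable 0 p) ?_ hp0
        intro x hx
        obtain ⟨hx0, hxp⟩ := hx
        have hx1 : x < 1 := lt_trans hxp hp1
        have h1x : 0 < 1 - x := by linarith
        have hG : 0 < x ^ (m * N - 1) * (1 - x) ^ (k * N - 1) :=
          mul_pos (Real.rpow_pos_of_pos hx0 _) (Real.rpow_pos_of_pos h1x _)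
        have hg := (g_core hk0 hm0 hx0 hx1).2 (by rw [← hpdef]; exact ne_of_lt hxp)
        have hlt : x ^ m * (1 - x) ^ k < c := by rw [hceq]; exact hg
        exact mul_pos hG (by linarith)
      have hsecond : 0 ≤ ∫ x in p..(1:ℝ),
          (x ^ (m * N - 1) * (1 - x) ^ (k * N - 1)) * (c - x ^ m * (1 - x) ^ k) := by
        refine intervalIntegral.integral_nonneg hp1.le ?_
        intro x hx
        obtain ⟨hxp, hx1⟩ := hx
        have hx0 : 0 < x := lt_of_lt_of_le hp0 hxp
        have hG : 0 ≤ x ^ (m * N - 1) * (1 - x) ^ (k * N - 1) :=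
          mul_nonneg (Real.rpow_nonneg hx0.le _) (Real.rpow_nonneg (by linarith) _)
        have hgle : x ^ m * (1 - x) ^ k ≤ c := by
          rcases lt_or_eq_of_le hx1 with h | h
          · rw [hceq]; exact (g_core hk0 hm0 hx0 h).1
          · rw [h, sub_self, Real.zero_rpow hk0.ne', mul_zero]
            exact hc0.le
        exact mul_nonneg hG (by linarith)
      linarith
    linarith [hdiff, hpos]
  apply strictMono_nat_of_lt_succ
  intro n
  show _ < _
  have hN : (1:ℝ) ≤ (n:ℝ) + 1 := by
    have := n.cast_nonneg (α := ℝ); linarith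
  have hN' : (1:ℝ) ≤ (n:ℝ) + 1 + 1 := by linarith
  have hq1 : Real.Gamma ((k + m) * ((n:ℝ) + 1)) /
      (Real.Gamma (m * ((n:ℝ) + 1)) * Real.Gamma (k * ((n:ℝ) + 1))) = 1 / J ((n:ℝ) + 1) := by
    rw [hJeq _ hN, one_div_div]
  have hq2 : Real.Gamma ((k + m) * ((n:ℝ) + 1 + 1)) /
      (Real.Gamma (m * ((n:ℝ) + 1 + 1)) * Real.Gamma (k * ((n:ℝ) + 1 + 1)))
      = 1 / J ((n:ℝ) + 1 + 1) := by
    rw [hJeq _ hN', one_div_div]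
  push_cast
  rw [hq1, hq2]
  have hJ1 := hJpos _ hN
  have hJ2 := hJpos _ hN'
  rw [one_div_mul_eq_div, one_div_mul_eq_div, div_lt_div_iff₀ hJ1 hJ2]
  calc c ^ (n + 1) * J ((n:ℝ) + 1 + 1) < c ^ (n + 1) * (c * J ((n:ℝ) + 1)) := by
        exact mul_lt_mul_of_pos_left (key _ hN) (pow_pos hc0 (n + 1))
    _ = c ^ (n + 1 + 1) * J ((n:ℝ) + 1) := by ring
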